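/- arXiv:1107.5110 — 2 statements merged into one kernel-verified Lean document; each statement's English description precedes it below -/
import Mathlib

section
/- Suppose X is a closed Riemannian manifold-with-time-dependent-metric, τ̄ = r², Ω ⊆ X is measurable, and l : X → ℝ satisfies l(q) ≤ (1/3)σ₊τ̄ + (1/4)Λ on Ω. If the reduced volume bound τ̄^{-m/2} ∫_X e^{-l} dμ ≤ (4π)^{m/2} holds (for the volume measure dμ at time -τ̄), then Vol_{-τ̄}(Ω) ≤ e^{(1/3)σ₊τ̄ + (1/4)Λ}(4πτ̄)^{m/2}. If moreover d/dt Vol_t(Ω) ≤ σ₋ Vol_t(Ω) on [-τ̄, 0], then Vol₀(Ω) ≤ e^{((1/3)σ₊ + σ₋)τ̄ + Λ/4}(4πτ̄)^{m/2} = (4π)^{m/2} e^{σ₋r² + σ₊r²/3 + Λ/4} r^m. -/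
open Set MeasureTheory Real

/-- Volume upper bound from the reduced volume: if the reduced distance `l` satisfies
`l ≤ σ₊τ̄/3 + Λ/4` on `Ω` and the reduced volume is at most `(4π)^{m/2}`, then
`Vol_{-τ̄}(Ω) ≤ e^{σ₊τ̄/3 + Λ/4}(4πτ̄)^{m/2}`; and if moreover `d/dt Vol_t(Ω) ≤ σ₋ Vol_t(Ω)`
on `[-τ̄,0]`, then `Vol₀(Ω) ≤ (4π)^{m/2} e^{σ₋r² + σ₊r²/3 + Λ/4} r^m` where `τ̄ = r²`. -/
theorem stmt_4 {X : Type*} [MeasurableSpace X] (μ : Measure X)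
    (Ω : Set X) (hΩ : MeasurableSet Ω)
    (m : ℕ) (r τb σp σm Λ : ℝ) (hr : 0 < r) (hτb : τb = r ^ 2)
    (l : X → ℝ) (hl : ∀ x ∈ Ω, l x ≤ (1 / 3) * σp * τb + (1 / 4) * Λ)
    (hint : Integrable (fun x => Real.exp (-l x)) μ)
    (hrv : τb ^ (-(m : ℝ) / 2) * (∫ x, Real.exp (-l x) ∂μ) ≤ (4 * π) ^ ((m : ℝ) / 2))
    (Vol : ℝ → ℝ) (hV0 : Vol (-τb) = (μ Ω).toReal)
    (hVd : ∀ t ∈ Set.Icc (-τb) (0 : ℝ), ∃ D, HasDerivAt Vol D t ∧ D ≤ σm * Vol t) :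
    (μ Ω).toReal ≤ Real.exp ((1 / 3) * σp * τb + Λ / 4) * (4 * π * τb) ^ ((m : ℝ) / 2) ∧
      Vol 0 ≤ (4 * π) ^ ((m : ℝ) / 2) *
        Real.exp (σm * r ^ 2 + σp * r ^ 2 / 3 + Λ / 4) * r ^ m := by
  have hτpos : 0 < τb := by rw [hτb]; positivity
  set c : ℝ := (1 / 3) * σp * τb + (1 / 4) * Λ with hc
  have hc4 : c = (1 / 3) * σp * τb + Λ / 4 := by rw [hc]; ring
  clear_value c
  have hπ : (0:ℝ) < 4 * π := by positivity
  -- step 1: integral bound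
  have hI : (∫ x, Real.exp (-l x) ∂μ) ≤ (4 * π * τb) ^ ((m : ℝ) / 2) := by
    have h1 : (4 * π * τb) ^ ((m : ℝ) / 2)
        = (4 * π) ^ ((m : ℝ) / 2) * τb ^ ((m : ℝ) / 2) :=
      Real.mul_rpow (le_of_lt hπ) hτpos.le
    have h2 : τb ^ (-(m : ℝ) / 2) = (τb ^ ((m : ℝ) / 2))⁻¹ := by
      rw [neg_div, Real.rpow_neg hτpos.le]
    have h3 : 0 < τb ^ ((m : ℝ) / 2) := Real.rpow_pos_of_pos hτpos _
    rw [h2] at hrv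
    rw [h1]
    calc (∫ x, Real.exp (-l x) ∂μ)
        = τb ^ ((m : ℝ) / 2) * ((τb ^ ((m : ℝ) / 2))⁻¹ * (∫ x, Real.exp (-l x) ∂μ)) := by
          field_simp
      _ ≤ τb ^ ((m : ℝ) / 2) * (4 * π) ^ ((m : ℝ) / 2) := by
          exact mul_le_mul_of_nonneg_left hrv h3.le
      _ = (4 * π) ^ ((m : ℝ) / 2) * τb ^ ((m : ℝ) / 2) := by ring
  -- step 2: first conclusion
  have part1 : (μ Ω).toReal ≤ Real.exp c * (4 * π * τb) ^ ((m : ℝ) / 2) := by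
    rcases eq_or_ne (μ Ω) ⊤ with htop | htop
    · rw [htop]; simp; positivity
    · have hfin : μ Ω < ⊤ := lt_top_iff_ne_top.2 htop
      have hlow : Real.exp (-c) * (μ Ω).toReal ≤ ∫ x, Real.exp (-l x) ∂μ := by
        have hconst : (∫ x in Ω, Real.exp (-c) ∂μ) = Real.exp (-c) * (μ Ω).toReal := by
          rw [setIntegral_const, smul_eq_mul, mul_comm]; rfl
        have hmono : (∫ x in Ω, Real.exp (-c) ∂μ) ≤ ∫ x in Ω, Real.exp (-l x) ∂μ := by
          apply setIntegral_mono_on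
          · exact integrableOn_const htop
          · exact hint.integrableOn
          · exact hΩ
          · intro x hx
            exact Real.exp_le_exp.2 (neg_le_neg (hl x hx))
        have hsub : (∫ x in Ω, Real.exp (-l x) ∂μ) ≤ ∫ x, Real.exp (-l x) ∂μ :=
          setIntegral_le_integral hint (Filter.Eventually.of_forall fun x => (Real.exp_pos _).le)
        rw [← hconst]
        exact hmono.trans hsub
      have := hlow.trans hI
      have hexp : 0 < Real.exp (-c) := Real.exp_pos _
      calc (μ Ω).toReal = Real.exp c * (Real.exp (-c) * (μ Ω).toReal) := by
            rw [← mul_assoc, ← Real.exp_add]; simp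
        _ ≤ Real.exp c * (4 * π * τb) ^ ((m : ℝ) / 2) :=
            mul_le_mul_of_nonneg_left this (Real.exp_pos _).le
  refine ⟨by rw [← hc4]; exact part1, ?_⟩
  -- step 3: Gronwall
  set f : ℝ → ℝ := fun t => Vol t * Real.exp (-σm * t) with hf
  have hderiv : ∀ t ∈ Set.Icc (-τb) (0:ℝ), ∃ D, HasDerivAt f D t ∧ D ≤ 0 := by
    intro t ht
    obtain ⟨D, hD, hDle⟩ := hVd t ht
    have he : HasDerivAt (fun s => Real.exp (-σm * s)) (Real.exp (-σm * t) * (-σm)) t := by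
      have := ((hasDerivAt_id t).const_mul (-σm)).exp
      simpa using this
    refine ⟨D * Real.exp (-σm * t) + Vol t * (Real.exp (-σm * t) * (-σm)), hD.mul he, ?_⟩
    have : D * Real.exp (-σm * t) + Vol t * (Real.exp (-σm * t) * (-σm))
        = Real.exp (-σm * t) * (D - σm * Vol t) := by ring
    rw [this]
    exact mul_nonpos_of_nonneg_of_nonpos (Real.exp_pos _).le (by linarith)
  have hfanti : AntitoneOn f (Set.Icc (-τb) 0) := by
    apply antitoneOn_of_deriv_nonpos (convex_Icc _ _)
    · intro x hx
      obtain ⟨D, hD, _⟩ := hderiv x hx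
      exact hD.continuousAt.continuousWithinAt
    · rw [interior_Icc]
      intro x hx
      obtain ⟨D, hD, _⟩ := hderiv x ⟨hx.1.le, hx.2.le⟩
      exact hD.differentiableAt.differentiableWithinAt
    · rw [interior_Icc]
      intro x hx
      obtain ⟨D, hD, hDle⟩ := hderiv x ⟨hx.1.le, hx.2.le⟩
      rw [hD.deriv]
      exact hDle
  have hmem1 : (-τb) ∈ Set.Icc (-τb) (0:ℝ) := ⟨le_refl _, by linarith⟩
  have hmem2 : (0:ℝ) ∈ Set.Icc (-τb) (0:ℝ) := ⟨by linarith, le_refl _⟩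
  have hle := hfanti hmem1 hmem2 (by linarith)
  have hf0 : f 0 = Vol 0 := by simp [hf]
  have hfτ : f (-τb) = (μ Ω).toReal * Real.exp (σm * τb) := by
    simp only [hf, hV0, neg_mul, neg_neg, mul_neg]
  rw [hf0, hfτ] at hle
  have hexp2 : 0 < Real.exp (σm * τb) := Real.exp_pos _
  have hbound : Vol 0 ≤ Real.exp c * (4 * π * τb) ^ ((m : ℝ) / 2) * Real.exp (σm * τb) :=
    hle.trans (mul_le_mul_of_nonneg_right part1 hexp2.le)
  have hτr : τb ^ ((m : ℝ) / 2) = r ^ m := by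
    rw [hτb, ← Real.rpow_natCast r 2, ← Real.rpow_natCast r m,
      ← Real.rpow_mul hr.le]
    congr 1
    push_cast
    ring
  have hrw : Real.exp c * (4 * π * τb) ^ ((m : ℝ) / 2) * Real.exp (σm * τb)
      = (4 * π) ^ ((m : ℝ) / 2) * Real.exp (σm * r ^ 2 + σp * r ^ 2 / 3 + Λ / 4) * r ^ m := by
    have hce : c + σm * τb = σm * r ^ 2 + σp * r ^ 2 / 3 + Λ / 4 := by
      rw [hc, hτb]; ring
    rw [Real.mul_rpow hπ.le hτpos.le, hτr, ← hce, Real.exp_add]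
    ring
  rw [hrw] at hbound
  exact hbound
end

section
/- Suppose w : X × [t₀, 0] → ℝ is positive with supremum M = sup_{X×[t₀,0]} w, and suppose the Gaussian-type gradient estimate w(x,0) ≥ w(x₀,0)·exp(−d²/(4|t₀|) − (d/√|t₀|)·√(log(M/w(x₀,0)))) holds, where d = d(x,x₀) at time 0. If t₀ = -r²/4, d ≤ r, w(x₀,0) ≥ (4π)^{-m/2} e^{-σ₊r²/3} r^{-m}, and M ≤ (4π·(3r²/4))^{-m/2} e^{B + σ₋·(3r²/4)}, then w(x,0) ≥ (4π)^{-m/2} e^{-1 - σ₊r²/3 - 2√(B + (σ₋ + σ₊/3)r² + (m/2)log(4/3))} · r^{-m}. -/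
open Real

/-- Combining the on-diagonal lower bound, the `L^∞` upper bound and the Gaussian-type
gradient estimate (with `t₀ = -r²/4`, `d ≤ r`) to get the pointwise lower bound for the
heat kernel `w` at time `0` on the ball of radius `r`.  Here `w0 = w(x₀,0)`,
`wx = w(x,0)`, `d = d(x,x₀)` and `M = sup w`. -/
theorem stmt_12 (w0 wx M d r B σp σm : ℝ) (m : ℕ)
    (hr : 0 < r) (hd0 : 0 ≤ d) (hd : d ≤ r)
    (hσp : 0 ≤ σp) (hσm : 0 ≤ σm)
    (hw0 : 0 < w0) (hw0M : w0 ≤ M)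
    (hgrad : w0 * Real.exp (-(d ^ 2) / (4 * (r ^ 2 / 4)) -
        (d / Real.sqrt (r ^ 2 / 4)) * Real.sqrt (Real.log (M / w0))) ≤ wx)
    (hlow : (4 * π) ^ (-(m : ℝ) / 2) * Real.exp (-σp * r ^ 2 / 3) * r ^ (-(m : ℝ)) ≤ w0)
    (hup : M ≤ (4 * π * (3 * r ^ 2 / 4)) ^ (-(m : ℝ) / 2) *
        Real.exp (B + σm * (3 * r ^ 2 / 4))) :
    (4 * π) ^ (-(m : ℝ) / 2) *
        Real.exp (-1 - σp * r ^ 2 / 3 -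
          2 * Real.sqrt (B + (σm + σp / 3) * r ^ 2 + ((m : ℝ) / 2) * Real.log (4 / 3))) *
        r ^ (-(m : ℝ)) ≤ wx := by
  have hπ : (0:ℝ) < 4 * π := by positivity
  set A : ℝ := (4 * π) ^ (-(m : ℝ) / 2) with hA
  have hA0 : 0 < A := Real.rpow_pos_of_pos hπ _
  have hrm : (0:ℝ) < r ^ (-(m : ℝ)) := Real.rpow_pos_of_pos hr _
  set Q : ℝ := B + (σm + σp / 3) * r ^ 2 + ((m : ℝ) / 2) * Real.log (4 / 3) with hQdef
  set w0low : ℝ := A * Real.exp (-σp * r ^ 2 / 3) * r ^ (-(m : ℝ)) with hw0low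
  have hw0low0 : 0 < w0low := by positivity
  -- key : M / w0 ≤ exp Q
  have hratio : M / w0 ≤ Real.exp Q := by
    have h1 : M / w0 ≤ ((4 * π * (3 * r ^ 2 / 4)) ^ (-(m : ℝ) / 2) *
        Real.exp (B + σm * (3 * r ^ 2 / 4))) / w0low := by
      have hMup0 : (0:ℝ) ≤ (4 * π * (3 * r ^ 2 / 4)) ^ (-(m : ℝ) / 2) *
          Real.exp (B + σm * (3 * r ^ 2 / 4)) := by positivity
      exact div_le_div₀ hMup0 hup hw0low0 hlow
    refine h1.trans ?_
    have hsplit : (4 * π * (3 * r ^ 2 / 4)) ^ (-(m : ℝ) / 2)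
        = A * ((3:ℝ)/4) ^ (-(m : ℝ) / 2) * r ^ (-(m : ℝ)) := by
      have h34 : 4 * π * (3 * r ^ 2 / 4) = (4 * π) * ((3:ℝ)/4) * r ^ 2 := by ring
      rw [h34, Real.mul_rpow (by positivity) (by positivity),
        Real.mul_rpow (by positivity) (by positivity)]
      have h2 : (r ^ 2 : ℝ) ^ (-(m : ℝ) / 2) = r ^ (-(m : ℝ)) := by
        rw [← Real.rpow_natCast r 2, ← Real.rpow_mul hr.le]
        congr 1; ring
      rw [h2]
    have h34exp : ((3:ℝ)/4) ^ (-(m : ℝ) / 2)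
        = Real.exp (((m : ℝ) / 2) * Real.log (4 / 3)) := by
      rw [← Real.exp_log (x := ((3:ℝ)/4) ^ (-(m : ℝ) / 2)) (by positivity),
        Real.log_rpow (by norm_num)]
      congr 1
      rw [show (4:ℝ)/3 = ((3:ℝ)/4)⁻¹ by norm_num, Real.log_inv]
      ring
    rw [hsplit, h34exp, div_le_iff₀ hw0low0, hw0low]
    rw [show A * Real.exp (((m : ℝ) / 2) * Real.log (4 / 3)) * r ^ (-(m : ℝ)) *
          Real.exp (B + σm * (3 * r ^ 2 / 4))
        = (A * r ^ (-(m : ℝ))) *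
          Real.exp (((m : ℝ) / 2) * Real.log (4 / 3) + (B + σm * (3 * r ^ 2 / 4))) by
          simp only [Real.exp_add]; ring,
      show Real.exp Q * (A * Real.exp (-σp * r ^ 2 / 3) * r ^ (-(m : ℝ)))
        = (A * r ^ (-(m : ℝ))) * Real.exp (Q + (-σp * r ^ 2 / 3)) by
          simp only [Real.exp_add]; ring]
    refine mul_le_mul_of_nonneg_left (Real.exp_le_exp.mpr ?_) (by positivity)
    rw [hQdef]
    nlinarith [sq_nonneg r, mul_nonneg hσm (sq_nonneg r)]
  have hMw0 : 0 < M / w0 := div_pos (hw0.trans_le hw0M) hw0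
  have hL0 : 0 ≤ Real.log (M / w0) := Real.log_nonneg ((one_le_div hw0).mpr hw0M)
  have hLQ : Real.log (M / w0) ≤ Q := by
    have := Real.log_le_log hMw0 hratio
    rwa [Real.log_exp] at this
  have hQ0 : 0 ≤ Q := hL0.trans hLQ
  have hsqrt : Real.sqrt (Real.log (M / w0)) ≤ Real.sqrt Q := Real.sqrt_le_sqrt hLQ
  have hs : Real.sqrt (r ^ 2 / 4) = r / 2 := by
    rw [show r ^ 2 / 4 = (r / 2) ^ 2 by ring, Real.sqrt_sq (by positivity)]
  have hE : -1 - 2 * Real.sqrt Q ≤ -(d ^ 2) / (4 * (r ^ 2 / 4)) -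
      (d / Real.sqrt (r ^ 2 / 4)) * Real.sqrt (Real.log (M / w0)) := by
    rw [hs]
    have h1 : d ^ 2 / r ^ 2 ≤ 1 := by
      rw [div_le_one (by positivity)]; nlinarith
    have hdr : d / (r / 2) ≤ 2 := by
      rw [div_le_iff₀ (by positivity)]; linarith
    have h2 : (d / (r / 2)) * Real.sqrt (Real.log (M / w0)) ≤ 2 * Real.sqrt Q :=
      mul_le_mul hdr hsqrt (Real.sqrt_nonneg _) (by norm_num)
    have heq : -(d ^ 2) / (4 * (r ^ 2 / 4)) = -(d ^ 2 / r ^ 2) := by ring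
    rw [heq]
    linarith
  have htar : A * Real.exp (-1 - σp * r ^ 2 / 3 - 2 * Real.sqrt Q) * r ^ (-(m : ℝ))
      = w0low * Real.exp (-1 - 2 * Real.sqrt Q) := by
    rw [hw0low, show -1 - σp * r ^ 2 / 3 - 2 * Real.sqrt Q
        = (-σp * r ^ 2 / 3) + (-1 - 2 * Real.sqrt Q) by ring, Real.exp_add]
    ring
  rw [htar]
  calc w0low * Real.exp (-1 - 2 * Real.sqrt Q)
      ≤ w0 * Real.exp (-(d ^ 2) / (4 * (r ^ 2 / 4)) -
          (d / Real.sqrt (r ^ 2 / 4)) * Real.sqrt (Real.log (M / w0))) :=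
        mul_le_mul hlow (Real.exp_le_exp.mpr hE) (Real.exp_pos _).le hw0.le
    _ ≤ wx := hgrad
end
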